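/- For all integers n and k with 0 < k < n − 1, the single-exclusion number satisfies S(n, n−k−1) ≤ ((1 + ln k)/k)·(binom(n,k) − 1), where ln denotes the natural logarithm and binom(n,k) the binomial coefficient. -/

import Mathlib

/-- An `(n,t)`-single-exclusion system: a collection of `t`-subsets (blocks) of an
`n`-set such that every subset `X` with `1 ≤ |X| ≤ t+1` has a block containing all
but exactly one element of `X`. -/
def IsSESystem (n t : ℕ) (S : Finset (Finset (Fin n))) : Prop :=
  (∀ B ∈ S, B.card = t) ∧
  ∀ X : Finset (Fin n), 1 ≤ X.card → X.card ≤ t + 1 → ∃ B ∈ S, (X \ B).card = 1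

/-- The `(n,t)`-single-exclusion number `S(n,t)`: the least number of blocks in an
`(n,t)`-single-exclusion system. -/
noncomputable def SENumber (n t : ℕ) : ℕ :=
  sInf {m : ℕ | ∃ S : Finset (Finset (Fin n)), IsSESystem n t S ∧ S.card = m}

open Finset

noncomputable section
namespace SEWork


/-- Harmonic tail bound: `∑_{i=s+1}^{N} 1/i ≤ log N - log s`. -/
lemma harmonic_tail_le (s : ℕ) (hs : 1 ≤ s) :
    ∀ N : ℕ, s ≤ N → ∑ i ∈ Icc (s+1) N, (1 : ℝ) / i ≤ Real.log N - Real.log s := by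
  intro N
  induction N with
  | zero => intro h; omega
  | succ N ih =>
    intro hN
    rcases Nat.lt_or_ge N s with h | h
    · -- N + 1 = s
      have : s = N + 1 := by omega
      subst this
      simp
    · have h1 : ∑ i ∈ Icc (s+1) (N+1), (1:ℝ)/i
          = (∑ i ∈ Icc (s+1) N, (1:ℝ)/i) + 1/((N:ℝ)+1) := by
        rw [Finset.sum_Icc_succ_top (by omega : s+1 ≤ N+1) (fun i : ℕ => (1:ℝ)/i)]
        push_cast
        ring
      have h2 := ih h
      have hNpos : (0:ℝ) < N := by exact_mod_cast Nat.lt_of_lt_of_le (by omega) h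
      have key : (1:ℝ)/(N+1) ≤ Real.log (N+1) - Real.log N := by
        have hx : (0:ℝ) < (N:ℝ)/(N+1) := by positivity
        have := Real.log_le_sub_one_of_pos hx
        rw [Real.log_div (by positivity) (by positivity)] at this
        have hN1 : (0:ℝ) < (N:ℝ)+1 := by positivity
        have : Real.log N - Real.log (N+1) ≤ (N:ℝ)/(N+1) - 1 := by exact_mod_cast this
        have hh : (N:ℝ)/(N+1) - 1 = -(1/(N+1)) := by field_simp; ring
        linarith [this, hh ▸ this]
      have : (Real.log N - Real.log s) + 1/(N+1) ≤ Real.log (N+1) - Real.log s := by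
        linarith
      push_cast
      linarith [h1, h2]

/-- Key analytic lemma for the greedy bound. -/
lemma sum_min_le (N k : ℕ) (A : ℝ) (hk : 1 ≤ k) (hA1 : 1 ≤ A) (hAN : A * k = N) :
    ∑ i ∈ Icc 1 N, min 1 (A / i) ≤ A * (1 + Real.log k) := by
  have hApos : 0 < A := by linarith
  rcases eq_or_lt_of_le hk with h1 | hk2
  · -- k = 1
    have hk1 : k = 1 := h1.symm
    subst hk1
    have hAN' : A = N := by simpa using hAN
    have : ∀ i ∈ Icc 1 N, min 1 (A / i) = 1 := by
      intro i hi
      simp only [mem_Icc] at hi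
      have hi1 : (1:ℝ) ≤ i := by exact_mod_cast hi.1
      have hiN : (i:ℝ) ≤ N := by exact_mod_cast hi.2
      have : (1:ℝ) ≤ A / i := by
        rw [le_div_iff₀ (by linarith)]
        rw [hAN']; linarith
      simp [min_eq_left, this]
    rw [Finset.sum_congr rfl this]
    simp [Nat.card_Icc, hAN']
  · -- k ≥ 2
    set a : ℕ := ⌊A⌋₊ with ha
    have ha1 : 1 ≤ a := (Nat.one_le_floor_iff A).mpr hA1
    have haA : (a:ℝ) ≤ A := Nat.floor_le hApos.le
    have hAa1 : A < a + 1 := Nat.lt_floor_add_one A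
    have hkR : (2:ℝ) ≤ k := by exact_mod_cast hk2
    have hNk : (N:ℝ) = A * k := hAN.symm
    have hNpos : (0:ℝ) < N := by rw [hNk]; positivity
    have haN : a + 1 ≤ N := by
      have h2A : 2 * A ≤ N := by rw [hNk]; nlinarith
      have : (a:ℝ) + 1 ≤ N := by nlinarith
      exact_mod_cast this
    have hsplit : Icc 1 N = Icc 1 a ∪ Icc (a+1) N := by
      ext x
      simp only [mem_Icc, mem_union]
      omega
    have hdisj : Disjoint (Icc 1 a) (Icc (a+1) N) := by
      rw [Finset.disjoint_left]
      intro x hx hx'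
      simp only [mem_Icc] at hx hx'
      omega
    rw [hsplit, Finset.sum_union hdisj]
    have hb1 : ∑ i ∈ Icc 1 a, min 1 (A / i) ≤ (a:ℝ) := by
      calc ∑ i ∈ Icc 1 a, min 1 (A / i) ≤ ∑ i ∈ Icc 1 a, (1:ℝ) := by
            exact Finset.sum_le_sum (fun i _ => min_le_left _ _)
        _ = a := by simp [Nat.card_Icc]
    have hins : Icc (a+1) N = insert (a+1) (Icc (a+2) N) := by
      ext x
      simp only [mem_Icc, mem_insert]
      omega
    have hb2 : ∑ i ∈ Icc (a+1) N, min 1 (A / i)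
        ≤ A / (a+1) + A * (Real.log N - Real.log (a+1)) := by
      have step1 : ∑ i ∈ Icc (a+1) N, min 1 (A / i) ≤ ∑ i ∈ Icc (a+1) N, A / i :=
        Finset.sum_le_sum (fun i _ => min_le_right _ _)
      have step2 : ∑ i ∈ Icc (a+1) N, A / i
          = A / ((a:ℝ)+1) + ∑ i ∈ Icc (a+2) N, A / i := by
        rw [hins, Finset.sum_insert (by simp [mem_Icc])]
        push_cast
        ring
      have step3 : ∑ i ∈ Icc (a+2) N, A / i
          ≤ A * (Real.log N - Real.log (a+1)) := by
        have := harmonic_tail_le (a+1) (by omega) N haN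
        have heq : ∑ i ∈ Icc (a+2) N, A / i = A * ∑ i ∈ Icc (a+2) N, (1:ℝ) / i := by
          rw [Finset.mul_sum]
          apply Finset.sum_congr rfl
          intro i _
          ring
        rw [heq]
        have hcast : ((a+1 : ℕ) : ℝ) = (a:ℝ) + 1 := by push_cast; ring
        calc A * ∑ i ∈ Icc (a+2) N, (1:ℝ) / i
            ≤ A * (Real.log N - Real.log ((a:ℕ)+1 : ℕ)) := by
              apply mul_le_mul_of_nonneg_left _ hApos.le
              exact_mod_cast this
          _ = A * (Real.log N - Real.log ((a:ℝ)+1)) := by rw [← hcast]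
      calc ∑ i ∈ Icc (a+1) N, min 1 (A / i) ≤ ∑ i ∈ Icc (a+1) N, A / i := step1
        _ = A / ((a:ℝ)+1) + ∑ i ∈ Icc (a+2) N, A / i := step2
        _ ≤ A / (a+1) + A * (Real.log N - Real.log (a+1)) := by linarith [step3]
    -- final arithmetic
    have ha1R : (0:ℝ) < (a:ℝ) + 1 := by positivity
    have hlogN : Real.log N = Real.log A + Real.log k := by
      rw [hNk, Real.log_mul (by positivity) (by positivity)]
    have hlog2 : Real.log A - Real.log ((a:ℝ)+1) ≤ A / ((a:ℝ)+1) - 1 := by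
      have hx : (0:ℝ) < A / ((a:ℝ)+1) := by positivity
      have := Real.log_le_sub_one_of_pos hx
      rwa [Real.log_div (by positivity) (by positivity)] at this
    -- combine
    have key : (a:ℝ) + A/((a:ℝ)+1) + A * (Real.log N - Real.log ((a:ℝ)+1))
        ≤ A * (1 + Real.log k) := by
      rw [hlogN]
      have h1 : A * (Real.log A + Real.log k - Real.log ((a:ℝ)+1))
          = A * Real.log k + A * (Real.log A - Real.log ((a:ℝ)+1)) := by ring
      rw [h1]
      have h2 : A * (Real.log A - Real.log ((a:ℝ)+1)) ≤ A * (A/((a:ℝ)+1) - 1) :=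
        mul_le_mul_of_nonneg_left hlog2 hApos.le
      have h3 : (a:ℝ) + A/((a:ℝ)+1) + A * (A/((a:ℝ)+1) - 1) ≤ A := by
        have expand : ((a:ℝ) + A/((a:ℝ)+1) + A * (A/((a:ℝ)+1) - 1) - A) * ((a:ℝ)+1)
            = (A - a) * (A - a - 1) := by
          field_simp
          ring
        have hsign : (A - (a:ℝ)) * (A - (a:ℝ) - 1) ≤ 0 :=
          mul_nonpos_of_nonneg_of_nonpos (by linarith) (by linarith)
        nlinarith [expand, hsign, ha1R]
      linarith
    linarith [hb1, hb2, key]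

/-- Abstract greedy covering lemma. -/
lemma greedy_cover {α β : Type*} [DecidableEq α] [DecidableEq β]
    (ℬ : Finset β) (Sb : β → Finset α) (r : ℕ) (hr : 0 < r) :
    ∀ (U : Finset α), (∀ a ∈ U, r ≤ (ℬ.filter (fun b => a ∈ Sb b)).card) →
    ∃ T ⊆ ℬ, (∀ a ∈ U, ∃ b ∈ T, a ∈ Sb b) ∧
      (T.card : ℝ) ≤ ∑ i ∈ Icc 1 U.card, min 1 ((ℬ.card : ℝ)/(r * i)) := by
  suffices H : ∀ u : ℕ, ∀ U : Finset α, U.card = u →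
      (∀ a ∈ U, r ≤ (ℬ.filter (fun b => a ∈ Sb b)).card) →
      ∃ T ⊆ ℬ, (∀ a ∈ U, ∃ b ∈ T, a ∈ Sb b) ∧
        (T.card : ℝ) ≤ ∑ i ∈ Icc 1 U.card, min 1 ((ℬ.card : ℝ)/(r * i)) by
    intro U hU
    exact H U.card U rfl hU
  intro u
  induction u using Nat.strong_induction_on with
  | _ u ih =>
    intro U hUcard hdeg
    rcases Finset.eq_empty_or_nonempty U with hU | hU
    · refine ⟨∅, empty_subset _, ?_, ?_⟩
      · intro a ha; rw [hU] at ha; simp at ha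
      · simp only [card_empty, Nat.cast_zero]
        apply Finset.sum_nonneg
        intro i hi
        simp only [mem_Icc] at hi
        have hi1 : 1 ≤ i := hi.1
        have : (0:ℝ) ≤ (ℬ.card : ℝ)/(r * i) := by positivity
        exact le_min (by norm_num) this
    · -- double counting
      have hBne : ℬ.Nonempty := by
        obtain ⟨a, ha⟩ := hU
        have h := hdeg a ha
        have h2 : (ℬ.filter (fun b => a ∈ Sb b)).Nonempty := by
          rw [← Finset.card_pos]; omega
        obtain ⟨b, hb⟩ := h2
        exact ⟨b, (Finset.mem_filter.mp hb).1⟩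
      have hfilter : ∀ b, (Sb b ∩ U).card = (U.filter (fun a => a ∈ Sb b)).card := by
        intro b
        congr 1
        ext a
        simp [Finset.mem_inter, Finset.mem_filter, and_comm]
      have hdc : U.card * r ≤ ∑ b ∈ ℬ, ((Sb b ∩ U).card) := by
        calc U.card * r = ∑ a ∈ U, r := by rw [Finset.sum_const, smul_eq_mul]
          _ ≤ ∑ a ∈ U, (ℬ.filter (fun b => a ∈ Sb b)).card :=
              Finset.sum_le_sum hdeg
          _ = ∑ a ∈ U, ∑ b ∈ ℬ, (if a ∈ Sb b then 1 else 0) := by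
              apply Finset.sum_congr rfl
              intro a _
              rw [Finset.card_filter]
          _ = ∑ b ∈ ℬ, ∑ a ∈ U, (if a ∈ Sb b then 1 else 0) := Finset.sum_comm
          _ = ∑ b ∈ ℬ, ((Sb b ∩ U).card) := by
              apply Finset.sum_congr rfl
              intro b _
              rw [hfilter b, Finset.card_filter]
      -- pick a good block
      have hex : ∃ b ∈ ℬ, U.card * r ≤ ℬ.card * ((Sb b ∩ U).card) := by
        by_contra hcon
        push_neg at hcon
        have h1 : ∑ b ∈ ℬ, (ℬ.card * ((Sb b ∩ U).card)) < ∑ b ∈ ℬ, (U.card * r) :=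
          Finset.sum_lt_sum_of_nonempty hBne (fun b hb => hcon b hb)
        rw [Finset.sum_const, smul_eq_mul, ← Finset.mul_sum] at h1
        have h2 : ℬ.card * (U.card * r) ≤ ℬ.card * ∑ b ∈ ℬ, ((Sb b ∩ U).card) :=
          Nat.mul_le_mul_left _ hdc
        exact absurd (lt_of_le_of_lt h2 h1) (lt_irrefl _)
      obtain ⟨b, hbB, hgood⟩ := hex
      set c := (Sb b ∩ U).card with hc
      have hcpos : 1 ≤ c := by
        by_contra hcc
        push_neg at hcc
        interval_cases c
        · simp only [Nat.mul_zero] at hgood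
          have : 0 < U.card * r := Nat.mul_pos (Finset.card_pos.mpr hU) hr
          omega
      have hcu : c ≤ U.card := by
        rw [hc]
        exact Finset.card_le_card (Finset.inter_subset_right)
      set U' := U \ Sb b with hU'
      have hU'card : U'.card = U.card - c := by
        rw [hU', hc]
        have := Finset.card_inter_add_card_sdiff U (Sb b)
        rw [Finset.inter_comm] at this
        omega
      obtain ⟨T', hT'B, hT'cov, hT'card⟩ := ih (U.card - c) (by omega) U'
        hU'card (fun a ha => hdeg a (Finset.mem_sdiff.mp ha).1)
      refine ⟨insert b T', ?_, ?_, ?_⟩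
      · intro x hx
        rcases Finset.mem_insert.mp hx with h | h
        · rwa [h]
        · exact hT'B h
      · intro a ha
        by_cases hab : a ∈ Sb b
        · exact ⟨b, Finset.mem_insert_self _ _, hab⟩
        · obtain ⟨b', hb', hab'⟩ := hT'cov a (Finset.mem_sdiff.mpr ⟨ha, hab⟩)
          exact ⟨b', Finset.mem_insert_of_mem hb', hab'⟩
      · -- cardinality bound
        have hcard1 : ((insert b T').card : ℝ) ≤ (T'.card : ℝ) + 1 := by
          have := Finset.card_insert_le b T'
          exact_mod_cast this
        rw [hU'card] at hT'card
        -- show 1 + ∑_{1}^{u-c} ≤ ∑_{1}^{u}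
        have hsplit : Icc 1 U.card = Icc 1 (U.card - c) ∪ Icc (U.card - c + 1) U.card := by
          ext x
          simp only [mem_Icc, mem_union]
          omega
        have hdisj : Disjoint (Icc 1 (U.card - c)) (Icc (U.card - c + 1) U.card) := by
          rw [Finset.disjoint_left]
          intro x hx hx'
          simp only [mem_Icc] at hx hx'
          omega
        have htail : (1:ℝ) ≤ ∑ i ∈ Icc (U.card - c + 1) U.card, min 1 ((ℬ.card : ℝ)/(r * i)) := by
          have hterm : ∀ i ∈ Icc (U.card - c + 1) U.card,
              min 1 ((ℬ.card : ℝ)/(r * U.card)) ≤ min 1 ((ℬ.card : ℝ)/(r * i)) := by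
            intro i hi
            simp only [mem_Icc] at hi
            apply min_le_min (le_refl _)
            have hi1 : (1:ℝ) ≤ (i:ℝ) := by exact_mod_cast hi.1.trans' (by omega)
            have hiu : (i:ℝ) ≤ U.card := by exact_mod_cast hi.2
            have hrR : (0:ℝ) < r := by exact_mod_cast hr
            gcongr
          have hcount : (Icc (U.card - c + 1) U.card).card = c := by
            rw [Nat.card_Icc]; omega
          calc (1:ℝ) ≤ c * min 1 ((ℬ.card : ℝ)/(r * U.card)) := by
                have hcR : (1:ℝ) ≤ c := by exact_mod_cast hcpos
                -- B/(r u) ≥ 1/c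
                have hBru : (1:ℝ)/c ≤ (ℬ.card : ℝ)/(r * U.card) := by
                  rw [div_le_div_iff₀ (by positivity) (by
                    have h1 : (0:ℝ) < r := by exact_mod_cast hr
                    have h2 : (0:ℝ) < U.card := by exact_mod_cast Finset.card_pos.mpr hU
                    positivity)]
                  have := hgood
                  have hcast : (U.card : ℝ) * r ≤ (ℬ.card : ℝ) * c := by exact_mod_cast hgood
                  nlinarith
                have : (1:ℝ)/c ≤ min 1 ((ℬ.card : ℝ)/(r * U.card)) := by
                  apply le_min
                  · rw [div_le_one (by positivity : (0:ℝ) < (c:ℝ))]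
                    exact hcR
                  · exact hBru
                calc (1:ℝ) = c * (1/c) := by field_simp
                  _ ≤ c * min 1 ((ℬ.card : ℝ)/(r * U.card)) := by
                      apply mul_le_mul_of_nonneg_left this (by positivity)
            _ ≤ ∑ i ∈ Icc (U.card - c + 1) U.card, min 1 ((ℬ.card : ℝ)/(r * i)) := by
                have hs := Finset.card_nsmul_le_sum (Icc (U.card - c + 1) U.card)
                  (fun i => min 1 ((ℬ.card : ℝ)/(r * i))) _ hterm
                rw [hcount, nsmul_eq_mul] at hs
                exact hs
        rw [hsplit, Finset.sum_union hdisj]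
        calc ((insert b T').card : ℝ) ≤ (T'.card : ℝ) + 1 := hcard1
          _ ≤ (∑ i ∈ Icc 1 (U.card - c), min 1 ((ℬ.card : ℝ)/(r * i))) + 1 := by linarith
          _ ≤ (∑ i ∈ Icc 1 (U.card - c), min 1 ((ℬ.card : ℝ)/(r * i)))
              + ∑ i ∈ Icc (U.card - c + 1) U.card, min 1 ((ℬ.card : ℝ)/(r * i)) := by linarith

def ground (n m : ℕ) : Finset (Fin n) := Finset.univ.filter (fun i => (i : ℕ) < m)

lemma mem_ground {n m : ℕ} {i : Fin n} : i ∈ ground n m ↔ (i:ℕ) < m := by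
  simp [ground]

lemma ground_card {n m : ℕ} (h : m ≤ n) : (ground n m).card = m := by
  classical
  conv_rhs => rw [← Finset.card_range m]
  refine Finset.card_bij' (fun (a : Fin n) (_ : a ∈ ground n m) => (a : ℕ))
    (fun (b : ℕ) (hb : b ∈ Finset.range m) => (⟨b, lt_of_lt_of_le (Finset.mem_range.mp hb) h⟩ : Fin n))
    ?_ ?_ ?_ ?_
  · intro a ha
    exact Finset.mem_range.mpr (mem_ground.mp ha)
  · intro b hb
    exact mem_ground.mpr (Finset.mem_range.mp hb)
  · intro a ha
    rfl
  · intro b hb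
    rfl

lemma ground_mono {n : ℕ} {m m' : ℕ} (h : m ≤ m') : ground n m ⊆ ground n m' := by
  intro i hi
  rw [mem_ground] at *
  omega

lemma ground_top {n : ℕ} : ground n n = Finset.univ := by
  ext i
  simp [mem_ground, i.isLt]

lemma card_supersets {n : ℕ} (G W : Finset (Fin n)) (hWG : W ⊆ G) (k : ℕ) (hk : W.card ≤ k) :
    (((G.powersetCard k)).filter (fun D => W ⊆ D)).card
      = (G.card - W.card).choose (k - W.card) := by
  classical
  rw [← Finset.card_sdiff_of_subset hWG, ← Finset.card_powersetCard]
  refine Finset.card_bij' (fun (D : Finset (Fin n)) (_ : D ∈ (G.powersetCard k).filter (fun D => W ⊆ D)) => D \ W)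
    (fun (E : Finset (Fin n)) (_ : E ∈ (G \ W).powersetCard (k - W.card)) => E ∪ W)
    ?_ ?_ ?_ ?_
  · intro D hD
    have hD' : (D ⊆ G ∧ D.card = k) ∧ W ⊆ D := by
      simpa only [Finset.mem_filter, Finset.mem_powersetCard] using hD
    obtain ⟨⟨hDG, hDcard⟩, hWD⟩ := hD'
    simp only [Finset.mem_powersetCard]
    constructor
    · exact Finset.sdiff_subset_sdiff hDG (le_refl _)
    · rw [Finset.card_sdiff_of_subset hWD, hDcard]
  · intro E hE
    have hE' : E ⊆ G \ W ∧ E.card = k - W.card := by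
      simpa only [Finset.mem_powersetCard] using hE
    obtain ⟨hEGW, hEcard⟩ := hE'
    simp only [Finset.mem_filter, Finset.mem_powersetCard]
    have hEG : E ⊆ G := hEGW.trans (Finset.sdiff_subset)
    have hdisj : Disjoint E W := by
      rw [Finset.disjoint_right]
      intro x hxW hxE
      exact (Finset.mem_sdiff.mp (hEGW hxE)).2 hxW
    refine ⟨⟨Finset.union_subset hEG hWG, ?_⟩, Finset.subset_union_right⟩
    rw [Finset.card_union_of_disjoint hdisj, hEcard]
    omega
  · intro D hD
    have hD' : (D ⊆ G ∧ D.card = k) ∧ W ⊆ D := by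
      simpa only [Finset.mem_filter, Finset.mem_powersetCard] using hD
    exact Finset.sdiff_union_of_subset hD'.2
  · intro E hE
    have hE' : E ⊆ G \ W ∧ E.card = k - W.card := by
      simpa only [Finset.mem_powersetCard] using hE
    have hdisj : Disjoint E W := by
      rw [Finset.disjoint_right]
      intro x hxW hxE
      exact (Finset.mem_sdiff.mp (hE'.1 hxE)).2 hxW
    exact Finset.union_sdiff_cancel_right hdisj

lemma k_le_choose (k m : ℕ) (hk : 1 ≤ k) (hm : k + 1 ≤ m) : k ≤ m.choose (k-1) := by
  have h1 : (k+1).choose (k-1) ≤ m.choose (k-1) := Nat.choose_le_choose _ hm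
  have h2 : (k+1).choose (k-1) = (k+1).choose 2 := by
    have := Nat.choose_symm (show k-1 ≤ k+1 by omega) (n := k+1)
    have he : (k+1) - (k-1) = 2 := by omega
    rw [he] at this
    exact this.symm
  have h3 : (k+1).choose 2 = (k+1) * k / 2 := by
    rw [Nat.choose_two_right]
    simp
  have h4 : k ≤ (k+1) * k / 2 := by
    rw [Nat.le_div_iff_mul_le (by norm_num)]
    nlinarith
  omega

lemma exists_covering {n : ℕ} (k m : ℕ) (hk : 1 ≤ k) (hm : k + 1 ≤ m) (hmn : m ≤ n) :
    ∃ 𝒟 : Finset (Finset (Fin n)),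
      (∀ D ∈ 𝒟, D ⊆ ground n m ∧ D.card = k) ∧
      (∀ W : Finset (Fin n), W ⊆ ground n m → W.card = k - 1 → ∃ D ∈ 𝒟, W ⊆ D) ∧
      (𝒟.card : ℝ) ≤ ((m.choose (k-1) : ℝ) / k) * (1 + Real.log k) := by
  classical
  set G := ground n m with hG
  have hGcard : G.card = m := ground_card hmn
  set ℬ := G.powersetCard k with hB
  set U := G.powersetCard (k-1) with hU
  set r := m - (k-1) with hr
  have hrpos : 0 < r := by omega
  have hdeg : ∀ W ∈ U, r ≤ (ℬ.filter (fun D => W ∈ D.powersetCard (k-1))).card := by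
    intro W hW
    rw [Finset.mem_powersetCard] at hW
    obtain ⟨hWG, hWcard⟩ := hW
    have hfe : ℬ.filter (fun D => W ∈ D.powersetCard (k-1)) = ℬ.filter (fun D => W ⊆ D) := by
      apply Finset.filter_congr
      intro D _
      simp [Finset.mem_powersetCard, hWcard]
    rw [hfe, hB, card_supersets G W hWG k (by omega), hGcard, hWcard]
    have : k - (k-1) = 1 := by omega
    rw [this, Nat.choose_one_right]
  obtain ⟨T, hTB, hTcov, hTcard⟩ := greedy_cover ℬ (fun D => D.powersetCard (k-1)) r hrpos U hdeg
  have hUcard : U.card = m.choose (k-1) := by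
    rw [hU, Finset.card_powersetCard, hGcard]
  have hBcard : ℬ.card = m.choose k := by
    rw [hB, Finset.card_powersetCard, hGcard]
  refine ⟨T, ?_, ?_, ?_⟩
  · intro D hD
    have := hTB hD
    rw [hB, Finset.mem_powersetCard] at this
    exact this
  · intro W hWG hWcard
    obtain ⟨D, hD, hWD⟩ := hTcov W (by rw [hU, Finset.mem_powersetCard]; exact ⟨hWG, hWcard⟩)
    rw [Finset.mem_powersetCard] at hWD
    exact ⟨D, hD, hWD.1⟩
  · set N := m.choose (k-1) with hN
    set A : ℝ := (N : ℝ) / k with hA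
    have hkR : (0:ℝ) < k := by exact_mod_cast hk
    have hrR : (0:ℝ) < r := by exact_mod_cast hrpos
    have hchoose : (m.choose k) * k = N * r := by
      have := Nat.choose_succ_right_eq m (k-1)
      have hsucc : k - 1 + 1 = k := by omega
      rw [hsucc] at this
      rw [hN, hr]
      omega
    have hsummand : ∀ i ∈ Icc 1 U.card, min 1 ((ℬ.card : ℝ)/(r * i)) = min 1 (A / i) := by
      intro i hi
      simp only [mem_Icc] at hi
      have hiR : (0:ℝ) < i := by exact_mod_cast hi.1.trans' (by omega)
      congr 1
      rw [hBcard, hA, div_div]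
      rw [div_eq_div_iff (by positivity) (by positivity)]
      have hc : ((m.choose k : ℕ):ℝ) * k = (N:ℝ) * r := by exact_mod_cast hchoose
      linear_combination (i:ℝ) * hc
    rw [Finset.sum_congr rfl hsummand, hUcard] at hTcard
    have hA1 : (1:ℝ) ≤ A := by
      rw [hA, le_div_iff₀ hkR]
      have := k_le_choose k m hk hm
      have : (k:ℝ) ≤ (N:ℝ) := by exact_mod_cast this
      linarith
    have hAN : A * k = N := by
      rw [hA]; field_simp
    calc (T.card : ℝ) ≤ ∑ i ∈ Icc 1 N, min 1 (A / i) := hTcard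
      _ ≤ A * (1 + Real.log k) := sum_min_le N k A hk hA1 hAN
      _ = ((m.choose (k-1) : ℝ) / k) * (1 + Real.log k) := by rw [hA, hN]

/-- Adjacency of blocks: sharing at least `k` elements. -/
def Adj (n k : ℕ) (𝒞 : Finset (Finset (Fin n))) (X Y : Finset (Fin n)) : Prop :=
  X ∈ 𝒞 ∧ Y ∈ 𝒞 ∧ k ≤ (X ∩ Y).card

lemma adj_symm (n k : ℕ) (𝒞 : Finset (Finset (Fin n))) : Symmetric (Adj n k 𝒞) := by
  intro X Y h
  refine ⟨h.2.1, h.1, ?_⟩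
  rw [Finset.inter_comm]
  exact h.2.2

/-- The main inductive construction. -/
lemma main_family {n k : ℕ} (hk : 1 ≤ k) :
    ∀ m, k + 1 ≤ m → m ≤ n →
    ∃ 𝒞 : Finset (Finset (Fin n)),
      (∀ C ∈ 𝒞, C ⊆ ground n m ∧ C.card = k+1) ∧
      (∀ Y : Finset (Fin n), Y ⊆ ground n m → Y.card = k → ∃ C ∈ 𝒞, Y ⊆ C) ∧
      (∀ C ∈ 𝒞, ∀ C' ∈ 𝒞, Relation.ReflTransGen (Adj n k 𝒞) C C') ∧
      ((𝒞.card : ℝ) ≤ 1 + ((1 + Real.log k)/k) * ((m.choose k : ℝ) - 1 - k)) := by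
  intro m hm
  induction m, hm using Nat.le_induction with
  | base =>
    intro hmn
    refine ⟨{ground n (k+1)}, ?_, ?_, ?_, ?_⟩
    · intro C hC
      rw [Finset.mem_singleton] at hC
      subst hC
      exact ⟨subset_rfl, ground_card hmn⟩
    · intro Y hY _
      exact ⟨ground n (k+1), Finset.mem_singleton_self _, hY⟩
    · intro C hC C' hC'
      rw [Finset.mem_singleton] at hC hC'
      subst hC; subst hC'
      exact Relation.ReflTransGen.refl
    · have : (k+1).choose k = k + 1 := Nat.choose_succ_self_right k
      rw [this]
      push_cast
      simp
  | succ m hm ih =>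
    intro hmn
    have hmn' : m ≤ n := by omega
    have hmltn : m < n := by omega
    obtain ⟨𝒞, hsz, hcov, hconn, hcard⟩ := ih hmn'
    obtain ⟨𝒟, hDsz, hDcov, hDcard⟩ := exists_covering k m hk hm hmn'
    set e : Fin n := ⟨m, hmltn⟩ with he
    have henot : e ∉ ground n m := by
      rw [mem_ground]; simp [he]
    have hein : e ∈ ground n (m+1) := by
      rw [mem_ground]; simp [he]
    classical
    set 𝒞' : Finset (Finset (Fin n)) := 𝒞 ∪ 𝒟.image (insert e) with hC'def
    have hold : 𝒞 ⊆ 𝒞' := Finset.subset_union_left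
    -- new blocks facts
    have hnew : ∀ D ∈ 𝒟, (insert e D ⊆ ground n (m+1)) ∧ (insert e D).card = k + 1 := by
      intro D hD
      obtain ⟨hDg, hDc⟩ := hDsz D hD
      constructor
      · intro x hx
        rcases Finset.mem_insert.mp hx with h | h
        · rw [h]; exact hein
        · exact ground_mono (by omega) (hDg h)
      · rw [Finset.card_insert_of_notMem (fun hcon => henot (hDg hcon)), hDc]
    -- every new block is adjacent to an old block
    have hlink : ∀ D ∈ 𝒟, ∃ C₀ ∈ 𝒞, Adj n k 𝒞' (insert e D) C₀ := by
      intro D hD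
      obtain ⟨hDg, hDc⟩ := hDsz D hD
      obtain ⟨C₀, hC₀, hDC₀⟩ := hcov D hDg hDc
      refine ⟨C₀, hC₀, Finset.mem_union_right _ (Finset.mem_image_of_mem _ hD), hold hC₀, ?_⟩
      calc k = D.card := hDc.symm
        _ ≤ ((insert e D) ∩ C₀).card := by
            apply Finset.card_le_card
            intro x hx
            exact Finset.mem_inter.mpr ⟨Finset.mem_insert_of_mem hx, hDC₀ hx⟩
    have hmono : ∀ C C', Relation.ReflTransGen (Adj n k 𝒞) C C' →
        Relation.ReflTransGen (Adj n k 𝒞') C C' := by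
      intro C C' h
      apply Relation.ReflTransGen.mono ?_ C C' h
      intro X Y hxy
      exact ⟨hold hxy.1, hold hxy.2.1, hxy.2.2⟩
    -- reach from any block to an old block
    have hreachold : ∀ C ∈ 𝒞', ∃ C₀ ∈ 𝒞, Relation.ReflTransGen (Adj n k 𝒞') C C₀ := by
      intro C hC
      rcases Finset.mem_union.mp hC with h | h
      · exact ⟨C, h, Relation.ReflTransGen.refl⟩
      · obtain ⟨D, hD, hDe⟩ := Finset.mem_image.mp h
        obtain ⟨C₀, hC₀, hadj⟩ := hlink D hD
        rw [hDe] at hadj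
        exact ⟨C₀, hC₀, Relation.ReflTransGen.single hadj⟩
    refine ⟨𝒞', ?_, ?_, ?_, ?_⟩
    · intro C hC
      rcases Finset.mem_union.mp hC with h | h
      · obtain ⟨h1, h2⟩ := hsz C h
        exact ⟨h1.trans (ground_mono (by omega)), h2⟩
      · obtain ⟨D, hD, hDe⟩ := Finset.mem_image.mp h
        rw [← hDe]
        exact hnew D hD
    · intro Y hYg hYc
      by_cases heY : e ∈ Y
      · set W := Y.erase e with hW
        have hWc : W.card = k - 1 := by
          rw [hW, Finset.card_erase_of_mem heY, hYc]
        have hWg : W ⊆ ground n m := by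
          intro x hx
          have hxY : x ∈ Y := Finset.mem_of_mem_erase hx
          have hxne : x ≠ e := Finset.ne_of_mem_erase hx
          have := hYg hxY
          rw [mem_ground] at *
          have : (x:ℕ) ≠ m := fun hcon => hxne (Fin.ext hcon)
          omega
        obtain ⟨D, hD, hWD⟩ := hDcov W hWg hWc
        refine ⟨insert e D, Finset.mem_union_right _ (Finset.mem_image_of_mem _ hD), ?_⟩
        intro x hx
        by_cases hxe : x = e
        · rw [hxe]; exact Finset.mem_insert_self _ _
        · exact Finset.mem_insert_of_mem (hWD (Finset.mem_erase.mpr ⟨hxe, hx⟩))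
      · have hYg' : Y ⊆ ground n m := by
          intro x hx
          have := hYg hx
          rw [mem_ground] at *
          have : (x:ℕ) ≠ m := by
            intro hcon
            apply heY
            have : x = e := Fin.ext hcon
            rwa [← this]
          omega
        obtain ⟨C, hC, hYC⟩ := hcov Y hYg' hYc
        exact ⟨C, hold hC, hYC⟩
    · -- connectivity
      intro C hC C' hC'
      obtain ⟨C₀, hC₀, hr₀⟩ := hreachold C hC
      obtain ⟨C₀', hC₀', hr₀'⟩ := hreachold C' hC'
      have hmid := hmono C₀ C₀' (hconn C₀ hC₀ C₀' hC₀')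
      have hback : Relation.ReflTransGen (Adj n k 𝒞') C₀' C' :=
        (@Relation.ReflTransGen.stdSymm _ _ ⟨fun a b h => adj_symm n k 𝒞' h⟩).symm _ _ hr₀'
      exact (hr₀.trans hmid).trans hback
    · -- cardinality
      have h1 : (𝒞'.card : ℝ) ≤ (𝒞.card : ℝ) + (𝒟.card : ℝ) := by
        have h3 : 𝒞'.card ≤ 𝒞.card + 𝒟.card := by
          rw [hC'def]
          calc (𝒞 ∪ 𝒟.image (insert e)).card
              ≤ 𝒞.card + (𝒟.image (insert e)).card := Finset.card_union_le _ _
            _ ≤ 𝒞.card + 𝒟.card := by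
                have := Finset.card_image_le (f := insert e) (s := 𝒟)
                omega
        exact_mod_cast h3
      have hpascal : ((m+1).choose k : ℝ) = (m.choose k : ℝ) + (m.choose (k-1) : ℝ) := by
        have hnat : (m+1).choose k = m.choose k + m.choose (k-1) := by
          obtain ⟨j, rfl⟩ : ∃ j, k = j + 1 := ⟨k-1, by omega⟩
          simpa [add_comm] using Nat.choose_succ_succ m j
        rw [hnat]
        push_cast
        ring
      have hDcard' : (𝒟.card : ℝ) ≤ ((1 + Real.log k)/k) * (m.choose (k-1) : ℝ) := by
        calc (𝒟.card : ℝ) ≤ ((m.choose (k-1) : ℝ) / k) * (1 + Real.log k) := hDcard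
          _ = ((1 + Real.log k)/k) * (m.choose (k-1) : ℝ) := by ring
      rw [hpascal]
      have : ((1 + Real.log k)/k) * ((m.choose k : ℝ) + (m.choose (k-1):ℝ) - 1 - k)
          = ((1 + Real.log k)/k) * ((m.choose k : ℝ) - 1 - k)
            + ((1 + Real.log k)/k) * (m.choose (k-1) : ℝ) := by ring
      rw [this]
      linarith

/-- Discrete intermediate value along a path of blocks. -/
lemma reach_one {n k : ℕ} (𝒞 : Finset (Finset (Fin n))) (X : Finset (Fin n))
    (hcard : ∀ C ∈ 𝒞, C.card = k+1) :
    ∀ C C' : Finset (Fin n), C ∈ 𝒞 → Relation.ReflTransGen (Adj n k 𝒞) C C' →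
      (C ∩ X).card ≤ 1 → 1 ≤ (C' ∩ X).card →
      ∃ D ∈ 𝒞, (D ∩ X).card = 1 := by
  intro C C' hCmem h
  induction h with
  | refl =>
    intro h1 h2
    exact ⟨C, hCmem, by omega⟩
  | @tail b c hreach hadj ih =>
    intro h1 h2
    by_cases hb : 1 ≤ (b ∩ X).card
    · exact ih h1 hb
    · push_neg at hb
      have hb0 : (b ∩ X).card = 0 := by omega
      obtain ⟨hbC, hcC, hshare⟩ := hadj
      have hsub : c ∩ X ⊆ (b ∩ X) ∪ (c \ b) := by
        intro x hx
        obtain ⟨hxc, hxX⟩ := Finset.mem_inter.mp hx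
        by_cases hxb : x ∈ b
        · exact Finset.mem_union_left _ (Finset.mem_inter.mpr ⟨hxb, hxX⟩)
        · exact Finset.mem_union_right _ (Finset.mem_sdiff.mpr ⟨hxc, hxb⟩)
      have hcb : (c \ b).card ≤ 1 := by
        have hh := Finset.card_inter_add_card_sdiff c b
        have : k ≤ (c ∩ b).card := by rwa [Finset.inter_comm] at hshare
        have := hcard c hcC
        omega
      have : (c ∩ X).card ≤ 1 := by
        calc (c ∩ X).card ≤ ((b ∩ X) ∪ (c \ b)).card := Finset.card_le_card hsub
          _ ≤ (b ∩ X).card + (c \ b).card := Finset.card_union_le _ _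
          _ ≤ 1 := by omega
      exact ⟨c, hcC, by omega⟩


lemma se_property {n k : ℕ} (hk : 1 ≤ k) (hkn : k + 2 ≤ n)
    (𝒞 : Finset (Finset (Fin n)))
    (hsz : ∀ C ∈ 𝒞, C ⊆ ground n n ∧ C.card = k+1)
    (hcov : ∀ Y : Finset (Fin n), Y ⊆ ground n n → Y.card = k → ∃ C ∈ 𝒞, Y ⊆ C)
    (hconn : ∀ C ∈ 𝒞, ∀ C' ∈ 𝒞, Relation.ReflTransGen (Adj n k 𝒞) C C') :
    ∀ X : Finset (Fin n), 1 ≤ X.card → X.card ≤ n - k → ∃ C ∈ 𝒞, (C ∩ X).card = 1 := by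
  classical
  intro X hX1 hX2
  -- a k-set avoiding X
  have hcompl : k ≤ Xᶜ.card := by
    rw [Finset.card_compl, Fintype.card_fin]
    omega
  obtain ⟨Y₀, hY₀sub, hY₀card⟩ := Finset.exists_subset_card_eq hcompl
  obtain ⟨C₀, hC₀mem, hY₀C₀⟩ := hcov Y₀ (by rw [ground_top]; exact Finset.subset_univ _) hY₀card
  have hC₀X : (C₀ ∩ X).card ≤ 1 := by
    have hsub : C₀ ∩ X ⊆ C₀ \ Y₀ := by
      intro x hx
      obtain ⟨hxC, hxX⟩ := Finset.mem_inter.mp hx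
      refine Finset.mem_sdiff.mpr ⟨hxC, fun hxY => ?_⟩
      exact (Finset.mem_compl.mp (hY₀sub hxY)) hxX
    calc (C₀ ∩ X).card ≤ (C₀ \ Y₀).card := Finset.card_le_card hsub
      _ = C₀.card - Y₀.card := Finset.card_sdiff_of_subset hY₀C₀
      _ ≤ 1 := by
          rw [(hsz C₀ hC₀mem).2, hY₀card]
          omega
  -- a k-set meeting X
  obtain ⟨x, hx⟩ := Finset.card_pos.mp (by omega : 0 < X.card)
  have herase : k - 1 ≤ (Finset.univ.erase x).card := by
    rw [Finset.card_erase_of_mem (Finset.mem_univ x), Finset.card_univ, Fintype.card_fin]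
    omega
  obtain ⟨E, hEsub, hEcard⟩ := Finset.exists_subset_card_eq herase
  have hxE : x ∉ E := fun hcon => (Finset.mem_erase.mp (hEsub hcon)).1 rfl
  have hY₁card : (insert x E).card = k := by
    rw [Finset.card_insert_of_notMem hxE, hEcard]
    omega
  obtain ⟨C₁, hC₁mem, hY₁C₁⟩ := hcov (insert x E) (by rw [ground_top]; exact Finset.subset_univ _) hY₁card
  have hC₁X : 1 ≤ (C₁ ∩ X).card := by
    apply Finset.card_pos.mpr
    exact ⟨x, Finset.mem_inter.mpr ⟨hY₁C₁ (Finset.mem_insert_self _ _), hx⟩⟩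
  exact reach_one 𝒞 X (fun C hC => (hsz C hC).2) C₀ C₁ hC₀mem
    (hconn C₀ hC₀mem C₁ hC₁mem) hC₀X hC₁X


end SEWork
end

theorem stmt10 (n k : ℕ) (hk : 0 < k) (hkn : k + 1 < n) :
    (SENumber n (n - k - 1) : ℝ) ≤
      ((1 + Real.log k) / (k : ℝ)) * ((n.choose k : ℝ) - 1) := by
  classical
  obtain ⟨𝒞, hsz, hcov, hconn, hcard⟩ := SEWork.main_family (n := n) (k := k) hk n (by omega) (le_refl n)
  have hse := SEWork.se_property hk (by omega) 𝒞 hsz hcov hconn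
  set S : Finset (Finset (Fin n)) := 𝒞.image (fun C => Cᶜ) with hS
  have hSE : IsSESystem n (n - k - 1) S := by
    constructor
    · intro B hB
      obtain ⟨C, hC, hBC⟩ := Finset.mem_image.mp hB
      rw [← hBC, Finset.card_compl, Fintype.card_fin, (hsz C hC).2]
      omega
    · intro X hX1 hX2
      have hX2' : X.card ≤ n - k := by omega
      obtain ⟨C, hC, hCX⟩ := hse X hX1 hX2'
      refine ⟨Cᶜ, Finset.mem_image_of_mem _ hC, ?_⟩
      rw [sdiff_compl]
      have : X ⊓ C = C ∩ X := by
        rw [Finset.inter_comm]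
        rfl
      rw [this, hCX]
  have hScard : S.card = 𝒞.card := Finset.card_image_of_injective 𝒞 compl_injective
  have hle : SENumber n (n - k - 1) ≤ S.card := Nat.sInf_le ⟨S, hSE, rfl⟩
  have hkR : (0:ℝ) < k := by exact_mod_cast hk
  have hck : ((1 + Real.log k)/k) * k = 1 + Real.log k := by
    field_simp
  have hlogk : 0 ≤ Real.log k := Real.log_nonneg (by exact_mod_cast hk)
  have hfinal : (𝒞.card : ℝ) ≤ ((1 + Real.log k) / (k : ℝ)) * ((n.choose k : ℝ) - 1) := by
    have expand : ((1 + Real.log k) / (k : ℝ)) * ((n.choose k : ℝ) - 1)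
        = ((1 + Real.log k)/k) * ((n.choose k : ℝ) - 1 - k) + ((1 + Real.log k)/k) * k := by
      ring
    rw [expand, hck]
    linarith
  calc (SENumber n (n - k - 1) : ℝ) ≤ (S.card : ℝ) := by exact_mod_cast hle
    _ = (𝒞.card : ℝ) := by exact_mod_cast hScard
    _ ≤ _ := hfinal
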